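/- Fix ρ₀ > 0 and set a := (√3/2)^{1/2}·ρ₀ and b := ((2+√3)/2)^{1/2}·ρ₀. The function w(r) := −(r² − (√3/2)ρ₀²)/(ρ₀⁴ − (r² − (√3/2)ρ₀²)²)^{1/2}, defined for 0 < r < b, is differentiable and satisfies w'(r) = (2w(r)³ + 2w(r) − √3(1 + w(r)²)^{3/2})/r on (0, b); moreover w(a) = 0, w(r) < √3 for all r ∈ (0, b), w(r) → √3 as r → 0⁺, w(r) → −∞ as r → b⁻, and for each fixed r > 0 one has w(r) → √3 as ρ₀ → ∞ (where w is defined once b > r). -/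

import Mathlib

open Filter

/-- The type-II solution `w(r) = −(r² − (√3/2)ρ₀²)/√(ρ₀⁴ − (r² − (√3/2)ρ₀²)²)`. -/
noncomputable def wTypeII (ρ₀ r : ℝ) : ℝ :=
  -(r ^ 2 - (Real.sqrt 3 / 2) * ρ₀ ^ 2) /
    Real.sqrt (ρ₀ ^ 4 - (r ^ 2 - (Real.sqrt 3 / 2) * ρ₀ ^ 2) ^ 2)

private lemma sqrt3_lt_two : Real.sqrt 3 < 2 := by
  nlinarith [Real.sq_sqrt (by norm_num : (0:ℝ) ≤ 3), Real.sqrt_nonneg 3]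

private lemma D_pos (ρ₀ r : ℝ) (hρ₀ : 0 < ρ₀) (hr0 : 0 ≤ r)
    (hrb : r < Real.sqrt ((2 + Real.sqrt 3) / 2) * ρ₀) :
    0 < ρ₀ ^ 4 - (r ^ 2 - Real.sqrt 3 / 2 * ρ₀ ^ 2) ^ 2 := by
  have h3 : Real.sqrt 3 < 2 := sqrt3_lt_two
  have h30 : (0:ℝ) ≤ Real.sqrt 3 := Real.sqrt_nonneg 3
  have hb2 : (Real.sqrt ((2 + Real.sqrt 3) / 2) * ρ₀) ^ 2 = (2 + Real.sqrt 3) / 2 * ρ₀ ^ 2 := by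
    rw [mul_pow, Real.sq_sqrt (by positivity)]
  have hr2 : r ^ 2 < (2 + Real.sqrt 3) / 2 * ρ₀ ^ 2 := by
    nlinarith [Real.sqrt_nonneg ((2 + Real.sqrt 3) / 2)]
  have hsu : r ^ 2 - Real.sqrt 3 / 2 * ρ₀ ^ 2 < ρ₀ ^ 2 := by nlinarith
  have hsl : -ρ₀ ^ 2 < r ^ 2 - Real.sqrt 3 / 2 * ρ₀ ^ 2 := by nlinarith [sq_nonneg r, sq_nonneg ρ₀]
  nlinarith [mul_pos (by linarith : (0:ℝ) < ρ₀ ^ 2 - (r ^ 2 - Real.sqrt 3 / 2 * ρ₀ ^ 2))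
    (by linarith : (0:ℝ) < ρ₀ ^ 2 + (r ^ 2 - Real.sqrt 3 / 2 * ρ₀ ^ 2))]

private lemma algebra_key (r s q p t : ℝ) (hr : r ≠ 0) (hq : q ≠ 0) (hp : p ≠ 0)
    (h1 : p ^ 2 = q ^ 2 + s ^ 2) (h2 : t = 2 * (r ^ 2 - s) / p) :
    (2 * (-s / q) ^ 3 + 2 * (-s / q) - t * (p / q) ^ 3) / r =
      ((-(2 * r)) * q - (-s) * ((-(2 * s ^ 1 * (2 * r))) / (2 * q))) / q ^ 2 := by
  subst h2
  field_simp
  linear_combination (s - r ^ 2) * h1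

private lemma wTypeII_deriv (ρ₀ r : ℝ) (hρ₀ : 0 < ρ₀) (hr : 0 < r)
    (hD : 0 < ρ₀ ^ 4 - (r ^ 2 - Real.sqrt 3 / 2 * ρ₀ ^ 2) ^ 2) :
    HasDerivAt (wTypeII ρ₀)
      ((2 * (wTypeII ρ₀ r) ^ 3 + 2 * wTypeII ρ₀ r
        - Real.sqrt 3 * (Real.sqrt (1 + (wTypeII ρ₀ r) ^ 2)) ^ 3) / r) r := by
  have hfun : wTypeII ρ₀ = fun x : ℝ =>
      -(x ^ 2 - Real.sqrt 3 / 2 * ρ₀ ^ 2) /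
        Real.sqrt (ρ₀ ^ 4 - (x ^ 2 - Real.sqrt 3 / 2 * ρ₀ ^ 2) ^ 2) := rfl
  set c : ℝ := Real.sqrt 3 / 2 * ρ₀ ^ 2 with hc
  set s : ℝ := r ^ 2 - c with hsdef
  set D : ℝ := ρ₀ ^ 4 - s ^ 2 with hDdef
  set q : ℝ := Real.sqrt D with hqdef
  have hqpos : 0 < q := Real.sqrt_pos.mpr hD
  have hq2 : q ^ 2 = D := Real.sq_sqrt hD.le
  have hs : HasDerivAt (fun x : ℝ => x ^ 2 - c) (2 * r) r := by
    simpa using (hasDerivAt_pow 2 r).sub_const c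
  have hDd : HasDerivAt (fun x : ℝ => ρ₀ ^ 4 - (x ^ 2 - c) ^ 2)
      (-(2 * s ^ 1 * (2 * r))) r := HasDerivAt.const_sub _ (hs.pow 2)
  have hqd : HasDerivAt (fun x : ℝ => Real.sqrt (ρ₀ ^ 4 - (x ^ 2 - c) ^ 2))
      ((-(2 * s ^ 1 * (2 * r))) / (2 * q)) r := hDd.sqrt hD.ne'
  have hw : HasDerivAt (fun x : ℝ =>
      -(x ^ 2 - c) / Real.sqrt (ρ₀ ^ 4 - (x ^ 2 - c) ^ 2))
      (((-(2 * r)) * q - (-s) * ((-(2 * s ^ 1 * (2 * r))) / (2 * q))) / q ^ 2) r :=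
    (hs.neg).div hqd hqpos.ne'
  rw [hfun]
  convert hw using 1
  beta_reduce
  have hterm : -(r ^ 2 - c) / Real.sqrt (ρ₀ ^ 4 - (r ^ 2 - c) ^ 2) = -s / q := rfl
  rw [hterm]
  have h1w : 1 + (-s / q) ^ 2 = (ρ₀ ^ 2 / q) ^ 2 := by
    field_simp
    nlinarith [hq2]
  have hsq : Real.sqrt (1 + (-s / q) ^ 2) = ρ₀ ^ 2 / q := by
    rw [h1w, Real.sqrt_sq (by positivity)]
  have hρ4 : (ρ₀ ^ 2) ^ 2 = q ^ 2 + s ^ 2 := by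
    have := hq2; rw [hDdef] at this; nlinarith [this]
  have h3c : Real.sqrt 3 = 2 * (r ^ 2 - s) / ρ₀ ^ 2 := by
    rw [hsdef, hc]; field_simp; ring
  rw [hsq]
  exact algebra_key r s q (ρ₀ ^ 2) (Real.sqrt 3) hr.ne' hqpos.ne' (by positivity) hρ4 h3c

/-- for `ρ₀ > 0`, `a = √(√3/2)·ρ₀` and `b = √((2+√3)/2)·ρ₀`, the function
`wTypeII ρ₀` solves `w' = (2w³ + 2w − √3(1+w²)^{3/2})/r` on `(0, b)`, vanishes at `a`,
satisfies `w < √3` on `(0, b)`, tends to `√3` as `r → 0⁺`, to `−∞` as `r → b⁻`, and for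
each fixed `r > 0` tends to `√3` as `ρ₀ → ∞`. -/
theorem stmt_6 (ρ₀ : ℝ) (hρ₀ : 0 < ρ₀) (a b : ℝ)
    (ha : a = Real.sqrt (Real.sqrt 3 / 2) * ρ₀)
    (hb : b = Real.sqrt ((2 + Real.sqrt 3) / 2) * ρ₀) :
    (∀ r ∈ Set.Ioo (0 : ℝ) b,
      HasDerivAt (wTypeII ρ₀)
        ((2 * (wTypeII ρ₀ r) ^ 3 + 2 * wTypeII ρ₀ r
          - Real.sqrt 3 * (Real.sqrt (1 + (wTypeII ρ₀ r) ^ 2)) ^ 3) / r) r)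
    ∧ wTypeII ρ₀ a = 0
    ∧ (∀ r ∈ Set.Ioo (0 : ℝ) b, wTypeII ρ₀ r < Real.sqrt 3)
    ∧ Tendsto (wTypeII ρ₀) (nhdsWithin 0 (Set.Ioi 0)) (nhds (Real.sqrt 3))
    ∧ Tendsto (wTypeII ρ₀) (nhdsWithin b (Set.Iio b)) atBot
    ∧ (∀ r : ℝ, 0 < r → Tendsto (fun ρ => wTypeII ρ r) atTop (nhds (Real.sqrt 3))) := by
  have h3sq : Real.sqrt 3 ^ 2 = 3 := Real.sq_sqrt (by norm_num)
  have h3pos : (0:ℝ) < Real.sqrt 3 := Real.sqrt_pos.mpr (by norm_num)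
  have hbpos : 0 < b := by
    rw [hb]; positivity
  refine ⟨?_, ?_, ?_, ?_, ?_, ?_⟩
  · -- derivative
    intro r hr
    exact wTypeII_deriv ρ₀ r hρ₀ hr.1 (D_pos ρ₀ r hρ₀ hr.1.le (hb ▸ hr.2))
  · -- value at a
    have ha2 : a ^ 2 = Real.sqrt 3 / 2 * ρ₀ ^ 2 := by
      rw [ha, mul_pow, Real.sq_sqrt (by positivity)]
    unfold wTypeII
    rw [ha2]
    simp
  · -- bound by √3
    intro r hr
    have hD : 0 < ρ₀ ^ 4 - (r ^ 2 - Real.sqrt 3 / 2 * ρ₀ ^ 2) ^ 2 :=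
      D_pos ρ₀ r hρ₀ hr.1.le (hb ▸ hr.2)
    have hqpos : 0 < Real.sqrt (ρ₀ ^ 4 - (r ^ 2 - Real.sqrt 3 / 2 * ρ₀ ^ 2) ^ 2) :=
      Real.sqrt_pos.mpr hD
    have hq2 : Real.sqrt (ρ₀ ^ 4 - (r ^ 2 - Real.sqrt 3 / 2 * ρ₀ ^ 2) ^ 2) ^ 2
        = ρ₀ ^ 4 - (r ^ 2 - Real.sqrt 3 / 2 * ρ₀ ^ 2) ^ 2 := Real.sq_sqrt hD.le
    unfold wTypeII
    rw [div_lt_iff₀ hqpos]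
    rcases le_or_gt (-(r ^ 2 - Real.sqrt 3 / 2 * ρ₀ ^ 2)) 0 with hs | hs
    · exact lt_of_le_of_lt hs (mul_pos h3pos hqpos)
    · apply lt_of_pow_lt_pow_left₀ 2 (by positivity)
      have hsl : -(Real.sqrt 3 / 2 * ρ₀ ^ 2) < r ^ 2 - Real.sqrt 3 / 2 * ρ₀ ^ 2 := by
        nlinarith [hr.1, sq_nonneg r]
      rw [mul_pow, h3sq]
      nlinarith [hq2, hsl, hs]
  · -- limit at 0⁺
    have hD0 : 0 < ρ₀ ^ 4 - ((0:ℝ) ^ 2 - Real.sqrt 3 / 2 * ρ₀ ^ 2) ^ 2 :=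
      D_pos ρ₀ 0 hρ₀ le_rfl (hb ▸ hbpos)
    have hcont : ContinuousAt (wTypeII ρ₀) 0 := by
      have hfun : wTypeII ρ₀ = fun x : ℝ =>
          -(x ^ 2 - Real.sqrt 3 / 2 * ρ₀ ^ 2) /
            Real.sqrt (ρ₀ ^ 4 - (x ^ 2 - Real.sqrt 3 / 2 * ρ₀ ^ 2) ^ 2) := rfl
      rw [hfun]
      apply ContinuousAt.div (by fun_prop) (ContinuousAt.sqrt (by fun_prop))
      exact ne_of_gt (Real.sqrt_pos.mpr hD0)
    have hval : wTypeII ρ₀ 0 = Real.sqrt 3 := by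
      have hinner : ρ₀ ^ 4 - ((0:ℝ) ^ 2 - Real.sqrt 3 / 2 * ρ₀ ^ 2) ^ 2 = (ρ₀ ^ 2 / 2) ^ 2 := by
        linear_combination (-(ρ₀ ^ 4) / 4) * h3sq
      unfold wTypeII
      rw [hinner, Real.sqrt_sq (by positivity)]
      field_simp
      ring
    have h := hcont.tendsto.mono_left (nhdsWithin_le_nhds (s := Set.Ioi (0:ℝ)))
    rwa [hval] at h
  · -- limit at b⁻
    have hb2 : b ^ 2 = (2 + Real.sqrt 3) / 2 * ρ₀ ^ 2 := by
      rw [hb, mul_pow, Real.sq_sqrt (by positivity)]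
    have hnum : Tendsto (fun r : ℝ => -(r ^ 2 - Real.sqrt 3 / 2 * ρ₀ ^ 2))
        (nhdsWithin b (Set.Iio b)) (nhds (-(ρ₀ ^ 2))) := by
      have hc : ContinuousAt (fun r : ℝ => -(r ^ 2 - Real.sqrt 3 / 2 * ρ₀ ^ 2)) b := by fun_prop
      have hv : -(b ^ 2 - Real.sqrt 3 / 2 * ρ₀ ^ 2) = -(ρ₀ ^ 2) := by
        rw [hb2]; ring
      have h := hc.tendsto.mono_left (nhdsWithin_le_nhds (s := Set.Iio b))
      rwa [hv] at h
    have hden : Tendsto (fun r : ℝ =>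
        Real.sqrt (ρ₀ ^ 4 - (r ^ 2 - Real.sqrt 3 / 2 * ρ₀ ^ 2) ^ 2))
        (nhdsWithin b (Set.Iio b)) (nhdsWithin 0 (Set.Ioi 0)) := by
      rw [tendsto_nhdsWithin_iff]
      constructor
      · have hc : ContinuousAt (fun r : ℝ =>
            Real.sqrt (ρ₀ ^ 4 - (r ^ 2 - Real.sqrt 3 / 2 * ρ₀ ^ 2) ^ 2)) b :=
          ContinuousAt.sqrt (by fun_prop)
        have hv : Real.sqrt (ρ₀ ^ 4 - (b ^ 2 - Real.sqrt 3 / 2 * ρ₀ ^ 2) ^ 2) = 0 := by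
          have : ρ₀ ^ 4 - (b ^ 2 - Real.sqrt 3 / 2 * ρ₀ ^ 2) ^ 2 = 0 := by
            rw [hb2]; ring
          rw [this, Real.sqrt_zero]
        have h := hc.tendsto.mono_left (nhdsWithin_le_nhds (s := Set.Iio b))
        rwa [hv] at h
      · filter_upwards [Ioo_mem_nhdsLT_of_mem (Set.mem_Ioc.mpr ⟨hbpos, le_rfl⟩)] with r hr
        exact Real.sqrt_pos.mpr (D_pos ρ₀ r hρ₀ hr.1.le (hb ▸ hr.2))
    have hmul : Tendsto (fun r : ℝ =>
        (-(r ^ 2 - Real.sqrt 3 / 2 * ρ₀ ^ 2)) *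
          (Real.sqrt (ρ₀ ^ 4 - (r ^ 2 - Real.sqrt 3 / 2 * ρ₀ ^ 2) ^ 2))⁻¹)
        (nhdsWithin b (Set.Iio b)) atBot :=
      Tendsto.neg_mul_atTop (neg_lt_zero.mpr (by positivity)) hnum hden.inv_tendsto_nhdsGT_zero
    have hfun : wTypeII ρ₀ = fun r : ℝ =>
        (-(r ^ 2 - Real.sqrt 3 / 2 * ρ₀ ^ 2)) *
          (Real.sqrt (ρ₀ ^ 4 - (r ^ 2 - Real.sqrt 3 / 2 * ρ₀ ^ 2) ^ 2))⁻¹ := by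
      funext x; rw [wTypeII, div_eq_mul_inv]
    rw [hfun]
    exact hmul
  · -- limit ρ₀ → ∞
    intro r hr
    set g : ℝ → ℝ := fun t =>
      (Real.sqrt 3 / 2 - t) / Real.sqrt (1 - (t - Real.sqrt 3 / 2) ^ 2) with hg
    have key : ∀ ρ : ℝ, 0 < ρ → wTypeII ρ r = g (r ^ 2 / ρ ^ 2) := by
      intro ρ hρ
      have hρ2 : (0:ℝ) < ρ ^ 2 := by positivity
      have e2 : ρ ^ 4 - (r ^ 2 - Real.sqrt 3 / 2 * ρ ^ 2) ^ 2
          = (ρ ^ 2) ^ 2 * (1 - (r ^ 2 / ρ ^ 2 - Real.sqrt 3 / 2) ^ 2) := by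
        field_simp
      have e1 : -(r ^ 2 - Real.sqrt 3 / 2 * ρ ^ 2)
          = ρ ^ 2 * (Real.sqrt 3 / 2 - r ^ 2 / ρ ^ 2) := by
        field_simp
        ring
      unfold wTypeII
      rw [e2, Real.sqrt_mul (by positivity), Real.sqrt_sq hρ2.le, e1,
        mul_div_mul_left _ _ hρ2.ne']
    have ht : Tendsto (fun ρ : ℝ => r ^ 2 / ρ ^ 2) atTop (nhds 0) := by
      have h1 : Tendsto (fun ρ : ℝ => ρ ^ 2) atTop atTop :=
        tendsto_pow_atTop two_ne_zero
      have h2 := h1.inv_tendsto_atTop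
      have h3 := h2.const_mul (r ^ 2)
      simpa [div_eq_mul_inv] using h3
    have hden0 : Real.sqrt (1 - ((0:ℝ) - Real.sqrt 3 / 2) ^ 2) = 1 / 2 := by
      have : 1 - ((0:ℝ) - Real.sqrt 3 / 2) ^ 2 = (1 / 2) ^ 2 := by
        linear_combination (-(1:ℝ) / 4) * h3sq
      rw [this, Real.sqrt_sq (by norm_num)]
    have hgc : ContinuousAt g 0 := by
      rw [hg]
      apply ContinuousAt.div (by fun_prop) (ContinuousAt.sqrt (by fun_prop))
      rw [hden0]; norm_num
    have hg0 : g 0 = Real.sqrt 3 := by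
      rw [hg]
      simp only
      rw [hden0]
      ring
    have := hgc.tendsto.comp ht
    rw [hg0] at this
    apply this.congr'
    filter_upwards [eventually_gt_atTop (0:ℝ)] with ρ hρ
    exact (key ρ hρ).symm
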